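/- Let f, h ∈ F_q[X] be non-constant polynomials and t₀ ∈ F_q be such that f(h(X)) - t₀ splits into (deg f)(deg h) distinct linear factors over F_q. Then the set A₀ of roots of f(h(X)) - t₀ in F_q can be partitioned into deg f sets B₁,...,B_{deg f}, each of cardinality deg h, such that h is constant on each B_i with value c_i ∈ F_q, and c_i ≠ c_j for i ≠ j. -/

import Mathlib

open Polynomial

theorem aux_nodup_roots {F : Type*} [Field F] [DecidableEq F] {p : F[X]}
    (hp : Squarefree p) : p.roots.Nodup := by
  rw [Multiset.nodup_iff_count_le_one]
  intro a
  rw [count_roots]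
  by_contra hlt
  push_neg at hlt
  have h2 : (X - C a) ^ 2 ∣ p := by
    calc (X - C a) ^ 2 ∣ (X - C a) ^ p.rootMultiplicity a := pow_dvd_pow _ hlt
    _ ∣ p := p.pow_rootMultiplicity_dvd a
  have hu := isUnit_iff_degree_eq_zero.mp (hp _ (by rwa [sq] at h2))
  simp [degree_X_sub_C] at hu

/-- If `f(h(X)) - t₀` splits into `(deg f)(deg h)` distinct linear factors
over `F`, then its root set can be partitioned into `deg f` sets `B i`, each of size
`deg h`, on each of which `h` is constant with pairwise distinct values. -/
theorem nest_partition {F : Type*} [Field F] [DecidableEq F]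
    (f h : F[X]) (hf : 1 ≤ f.natDegree) (hh : 1 ≤ h.natDegree) (t₀ : F)
    (hsplit : (f.comp h - C t₀).Splits)
    (hsep : Squarefree (f.comp h - C t₀)) :
    ∃ (B : Fin f.natDegree → Finset F) (c : Fin f.natDegree → F),
      (∀ i j : Fin f.natDegree, i ≠ j → Disjoint (B i) (B j)) ∧
      (Finset.univ.biUnion B = (f.comp h - C t₀).roots.toFinset) ∧
      (∀ i, (B i).card = h.natDegree) ∧
      (∀ i, ∀ x ∈ B i, h.eval x = c i) ∧
      Function.Injective c := by
  set P : F[X] := f.comp h - C t₀ with hP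
  set g : F[X] := f - C t₀ with hg
  have hgdeg : g.natDegree = f.natDegree := natDegree_sub_C
  have hg0 : g ≠ 0 := by
    intro h0
    rw [h0] at hgdeg
    simp at hgdeg; omega
  have hPdeg : P.natDegree = f.natDegree * h.natDegree := by
    rw [hP, natDegree_sub_C, natDegree_comp]
  have hP0 : P ≠ 0 := by
    intro h0
    rw [h0] at hPdeg
    simp at hPdeg
    rcases hPdeg with h1 | h1 <;> omega
  -- S : root set of P
  set S : Finset F := P.roots.toFinset with hS
  have hnodup : P.roots.Nodup := aux_nodup_roots hsep
  have hScard : S.card = f.natDegree * h.natDegree := by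
    rw [hS, Multiset.toFinset_card_of_nodup hnodup,
      splits_iff_card_roots.mp hsplit, hPdeg]
  -- T : root set of g
  set T : Finset F := g.roots.toFinset with hT
  have hTcard_le : T.card ≤ f.natDegree := by
    calc T.card ≤ Multiset.card g.roots := Multiset.toFinset_card_le _
    _ ≤ g.natDegree := card_roots' g
    _ = f.natDegree := hgdeg
  -- fibers
  set B' : F → Finset F := fun y => S.filter (fun x => h.eval x = y) with hB'
  have hmemS : ∀ x ∈ S, h.eval x ∈ T := by
    intro x hx
    rw [hS, Multiset.mem_toFinset, mem_roots hP0] at hx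
    rw [hT, Multiset.mem_toFinset, mem_roots hg0]
    simpa [hP, hg, eval_comp] using hx
  have hunion : T.biUnion B' = S := by
    ext x
    simp only [Finset.mem_biUnion, hB', Finset.mem_filter]
    constructor
    · rintro ⟨y, _, hx, _⟩; exact hx
    · intro hx; exact ⟨h.eval x, hmemS x hx, hx, rfl⟩
  have hdisj : ∀ y₁ ∈ T, ∀ y₂ ∈ T, y₁ ≠ y₂ → Disjoint (B' y₁) (B' y₂) := by
    intro y₁ _ y₂ _ hne
    refine Finset.disjoint_left.mpr fun x hx1 hx2 => hne ?_
    rw [hB', Finset.mem_filter] at hx1 hx2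
    rw [← hx1.2, ← hx2.2]
  have hfib_le : ∀ y, (B' y).card ≤ h.natDegree := by
    intro y
    have hsub : B' y ⊆ (h - C y).roots.toFinset := by
      intro x hx
      rw [hB', Finset.mem_filter] at hx
      rw [Multiset.mem_toFinset, mem_roots (by
        intro h0
        have := natDegree_sub_C (p := h) (a := y)
        rw [h0] at this; simp at this; omega)]
      simp [IsRoot, hx.2]
    calc (B' y).card ≤ (h - C y).roots.toFinset.card := Finset.card_le_card hsub
    _ ≤ Multiset.card (h - C y).roots := Multiset.toFinset_card_le _
    _ ≤ (h - C y).natDegree := card_roots' _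
    _ = h.natDegree := natDegree_sub_C
  have hsum : ∑ y ∈ T, (B' y).card = f.natDegree * h.natDegree := by
    rw [← Finset.card_biUnion hdisj, hunion, hScard]
  have hsum_le : ∑ y ∈ T, (B' y).card ≤ T.card * h.natDegree := by
    simpa using Finset.sum_le_card_nsmul T _ h.natDegree (fun y _ => hfib_le y)
  have hTcard : T.card = f.natDegree := by
    have : f.natDegree * h.natDegree ≤ T.card * h.natDegree := by omega
    have := Nat.le_of_mul_le_mul_right this (by omega)
    omega
  have hfib_eq : ∀ y ∈ T, (B' y).card = h.natDegree := by
    by_contra hcon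
    push_neg at hcon
    obtain ⟨y, hy, hne⟩ := hcon
    have hlt : (B' y).card < h.natDegree := lt_of_le_of_ne (hfib_le y) hne
    have : ∑ z ∈ T, (B' z).card < ∑ z ∈ T, h.natDegree :=
      Finset.sum_lt_sum (fun z _ => hfib_le z) ⟨y, hy, hlt⟩
    rw [hsum, Finset.sum_const, smul_eq_mul, hTcard] at this
    omega
  -- enumeration of T
  set e : Fin f.natDegree ≃ {x // x ∈ T} := (T.equivFinOfCardEq hTcard).symm with he
  refine ⟨fun i => B' (e i : F), fun i => (e i : F), ?_, ?_, ?_, ?_, ?_⟩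
  · intro i j hij
    refine hdisj _ (e i).2 _ (e j).2 fun hv => hij ?_
    exact e.injective (Subtype.ext hv)
  · ext x
    simp only [Finset.mem_biUnion, Finset.mem_univ, true_and]
    rw [← hunion]
    simp only [Finset.mem_biUnion]
    constructor
    · rintro ⟨i, hx⟩; exact ⟨(e i : F), (e i).2, hx⟩
    · rintro ⟨y, hy, hx⟩
      exact ⟨e.symm ⟨y, hy⟩, by simpa using hx⟩
  · intro i; exact hfib_eq _ (e i).2
  · intro i x hx
    rw [hB', Finset.mem_filter] at hx
    exact hx.2
  · intro i j hij
    exact e.injective (Subtype.ext hij)
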